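/- Let R be a semiprime left Goldie ring and T a subring of R containing an essential left ideal L of R with right annihilator zero. Then T is a semiprime left Goldie ring and the classical left quotient rings of T and R coincide. -/

import Mathlib

universe u v

/-- The left annihilator of the set `L` in `S` is zero. -/
def LAnnZero (S : Type u) [Ring S] (L : Set S) : Prop :=
  ∀ a : S, (∀ x ∈ L, a * x = 0) → a = 0

/-- The right annihilator of the set `L` in `S` is zero. -/
def RAnnZero (S : Type u) [Ring S] (L : Set S) : Prop :=
  ∀ a : S, (∀ x ∈ L, x * a = 0) → a = 0

/-- A left ideal is essential: it meets every nonzero left ideal nontrivially. -/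
def IsEssentialLeftIdeal {S : Type u} [Ring S] (L : Ideal S) : Prop :=
  ∀ I : Ideal S, I ≠ ⊥ → L ⊓ I ≠ ⊥

/-- A (possibly noncommutative) ring is semiprime: `aRa = 0` implies `a = 0`. -/
def IsSemiprimeRing (S : Type u) [Ring S] : Prop :=
  ∀ a : S, (∀ r : S, a * r * a = 0) → a = 0

/-- A (possibly noncommutative) ring is prime: it is nonzero and `aRb = 0`
implies `a = 0` or `b = 0`. -/
def IsPrimeRingE (S : Type u) [Ring S] : Prop :=
  Nontrivial S ∧ ∀ a b : S, (∀ r : S, a * r * b = 0) → a = 0 ∨ b = 0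

/-- `a` is left regular: its left annihilator is zero. -/
def LeftReg {S : Type u} [Ring S] (a : S) : Prop := ∀ x : S, x * a = 0 → x = 0

/-- `a` is right regular: its right annihilator is zero. -/
def RightReg {S : Type u} [Ring S] (a : S) : Prop := ∀ x : S, a * x = 0 → x = 0

/-- `a` is regular: neither a left nor a right zero divisor. -/
def Reg {S : Type u} [Ring S] (a : S) : Prop := LeftReg a ∧ RightReg a

/-- A self-map of a ring has large image: its range contains an essential
left ideal with zero right annihilator. -/
def HasLargeImage {S : Type u} [Ring S] (f : S → S) : Prop :=
  ∃ L : Ideal S, IsEssentialLeftIdeal L ∧ RAnnZero S (L : Set S) ∧ (L : Set S) ⊆ Set.range f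

/-- The left annihilator of a set, as a left ideal. -/
def lAnnIdeal (S : Type u) [Ring S] (X : Set S) : Ideal S where
  carrier := {a | ∀ x ∈ X, a * x = 0}
  add_mem' := by intro a b ha hb x hx; rw [add_mul, ha x hx, hb x hx, add_zero]
  zero_mem' := by intro x hx; rw [zero_mul]
  smul_mem' := by intro r a ha x hx; simp only [smul_eq_mul, mul_assoc, ha x hx, mul_zero]

/-- ACC on left annihilator ideals. -/
def AccLeftAnn (S : Type u) [Ring S] : Prop :=
  ∀ X : ℕ → Set S, (∀ n, lAnnIdeal S (X n) ≤ lAnnIdeal S (X (n + 1))) →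
    ∃ N, ∀ m, N ≤ m → lAnnIdeal S (X m) = lAnnIdeal S (X N)

/-- Finite uniform (Goldie) dimension on the left: no infinite independent
family of nonzero left ideals. -/
def FinUdim (S : Type u) [Ring S] : Prop :=
  ¬ ∃ f : ℕ → Ideal S, (∀ n, f n ≠ ⊥) ∧ iSupIndep f

/-- Left Goldie ring: ACC on left annihilators and finite left uniform dimension. -/
def IsLeftGoldie (S : Type u) [Ring S] : Prop := AccLeftAnn S ∧ FinUdim S

/-- The left uniform (Goldie) dimension of `S` is at least `n`. -/
def UdimGE (S : Type u) [Ring S] (n : ℕ) : Prop :=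
  ∃ f : Fin n → Ideal S, (∀ i, f i ≠ ⊥) ∧ iSupIndep f

/-- `ι : R →+* Q` realizes `Q` as a classical left quotient ring of `R`:
`ι` is injective, regular elements become units, and every element of `Q`
is a left fraction `(ι s)⁻¹ * (ι a)` with `s` regular. -/
structure IsLeftQuotRing {R : Type u} {Q : Type v} [Ring R] [Ring Q] (ι : R →+* Q) : Prop where
  inj : Function.Injective ι
  unit : ∀ a : R, Reg a → IsUnit (ι a)
  frac : ∀ q : Q, ∃ a s : R, Reg s ∧ ι s * q = ι a

/-- An ideal (a priori only a left ideal) is two-sided. -/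
def IsTwoSided {S : Type u} [Ring S] (I : Ideal S) : Prop := ∀ x ∈ I, ∀ r : S, x * r ∈ I

/-- ACC on two-sided ideals. -/
def AccTwoSided (S : Type u) [Ring S] : Prop :=
  ∀ f : ℕ → Ideal S, (∀ n, IsTwoSided (f n)) → (∀ n, f n ≤ f (n + 1)) →
    ∃ N, ∀ m, N ≤ m → f m = f N

/-- A trivially ordered set: no strict comparabilities. -/
def TrivOrd (P : Type u) [Preorder P] : Prop := ∀ x y : P, ¬ x < y

/-- `DevLE α P` : the deviation (in the sense of Gabriel–Rentschler) of the
poset `P` is at most `α` (where trivially ordered intervals count as having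
deviation `-∞`). -/
def DevLE (α : Ordinal.{v}) (P : Type u) [Preorder P] : Prop :=
  ∀ f : ℕ → P, (∀ n, f (n + 1) ≤ f n) →
    ∃ N : ℕ, ∀ n, N ≤ n →
      TrivOrd ↥(Set.Icc (f (n + 1)) (f n)) ∨
      ∃ β, ∃ _ : β < α, DevLE β ↥(Set.Icc (f (n + 1)) (f n))
termination_by α

/-- `R` has left Krull dimension in the sense of Gabriel–Rentschler: the
poset of left ideals of `R` has deviation. -/
def HasLeftKrullDim (R : Type u) [Ring R] : Prop :=
  ∃ α : Ordinal.{u}, DevLE α (Ideal R)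

/-- `(A, ι, τ)` is a Cohn–Jordan extension of `(R, σ)`: `ι : R → A` is an
injective embedding, the automorphism `τ` of `A` extends `σ`, and every
element of `A` is mapped into `R` by some positive power of `τ`. -/
structure IsCohnJordan {R A : Type u} [Ring R] [Ring A] (σ : R →+* R) (ι : R →+* A)
    (τ : A ≃+* A) : Prop where
  inj : Function.Injective ι
  comm : ∀ r : R, τ (ι r) = ι (σ r)
  small : ∀ a : A, ∃ n : ℕ, 1 ≤ n ∧ (⇑τ)^[n] a ∈ Set.range ι

section Aux

variable {R : Type u} [Ring R]

lemma mem_lAnn {X : Set R} {a : R} : a ∈ lAnnIdeal R X ↔ ∀ x ∈ X, a * x = 0 := Iff.rfl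

lemma lAnn_antitone {X Y : Set R} (h : X ⊆ Y) : lAnnIdeal R Y ≤ lAnnIdeal R X :=
  fun _ ha x hx => ha x (h hx)

lemma essMono {M N : Ideal R} (h : M ≤ N) (hM : IsEssentialLeftIdeal M) :
    IsEssentialLeftIdeal N := by
  intro I hI
  have h1 := hM I hI
  intro h2
  exact h1 (eq_bot_iff.2 (le_trans (inf_le_inf_right I h) (le_of_eq h2)))

lemma essInf' {M N : Ideal R} (hM : IsEssentialLeftIdeal M) (hN : IsEssentialLeftIdeal N) :
    IsEssentialLeftIdeal (M ⊓ N) := by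
  intro I hI
  have h1 : M ⊓ I ≠ ⊥ := hM I hI
  have h2 : N ⊓ (M ⊓ I) ≠ ⊥ := hN _ h1
  intro h3
  apply h2
  rw [eq_bot_iff] at h3 ⊢
  refine le_trans ?_ h3
  intro x hx
  exact ⟨⟨hx.2.1, hx.1⟩, hx.2.2⟩

lemma essElem {M : Ideal R} :
    IsEssentialLeftIdeal M ↔ ∀ x : R, x ≠ 0 → ∃ r : R, r * x ∈ M ∧ r * x ≠ 0 := by
  constructor
  · intro h x hx
    have hsp : Ideal.span {x} ≠ ⊥ := by
      intro hb
      exact hx (by simpa using (eq_bot_iff.1 hb) (Ideal.subset_span (Set.mem_singleton x)))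
    have := h _ hsp
    rw [Submodule.ne_bot_iff] at this
    obtain ⟨y, ⟨hyM, hyx⟩, hy0⟩ := this
    obtain ⟨r, hr⟩ := Submodule.mem_span_singleton.1 hyx
    rw [smul_eq_mul] at hr
    exact ⟨r, by rw [hr]; exact hyM, by rw [hr]; exact hy0⟩
  · intro h I hI
    rw [Submodule.ne_bot_iff] at hI
    obtain ⟨x, hxI, hx0⟩ := hI
    obtain ⟨r, hrM, hr0⟩ := h x hx0
    rw [Submodule.ne_bot_iff]
    exact ⟨r * x, ⟨hrM, I.smul_mem r hxI⟩, hr0⟩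

/-- preimage of an essential left ideal under right multiplication is essential -/
lemma essComap {M : Ideal R} (hM : IsEssentialLeftIdeal M) (r : R) :
    IsEssentialLeftIdeal (Submodule.comap (LinearMap.toSpanSingleton R R r) M) := by
  rw [essElem] at hM ⊢
  intro x hx
  by_cases hxr : x * r = 0
  · refine ⟨1, ?_, by simpa using hx⟩
    simp only [one_mul, Submodule.mem_comap, LinearMap.toSpanSingleton_apply, smul_eq_mul, hxr]
    exact M.zero_mem
  · obtain ⟨s, hsM, hs0⟩ := hM (x * r) hxr
    refine ⟨s, ?_, ?_⟩
    · simp only [Submodule.mem_comap, LinearMap.toSpanSingleton_apply, smul_eq_mul]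
      rw [mul_assoc]; exact hsM
    · intro h0
      exact hs0 (by rw [← mul_assoc, h0, zero_mul])

/-- maximal left annihilator in any nonempty family -/
lemma maxAnn (hacc : AccLeftAnn R) {α : Type*} [Nonempty α] (G : α → Set R) :
    ∃ a : α, ∀ b : α, lAnnIdeal R (G a) ≤ lAnnIdeal R (G b) →
      lAnnIdeal R (G b) = lAnnIdeal R (G a) := by
  by_contra h
  push_neg at h
  choose g hg1 hg2 using h
  obtain ⟨a0⟩ := ‹Nonempty α›
  set u : ℕ → α := fun n => g^[n] a0 with hu
  have hstep : ∀ n, u (n + 1) = g (u n) := by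
    intro n; rw [hu]; simp [Function.iterate_succ_apply']
  have hmono : ∀ n, lAnnIdeal R (G (u n)) ≤ lAnnIdeal R (G (u (n + 1))) := by
    intro n; rw [hstep]; exact hg1 (u n)
  obtain ⟨N, hN⟩ := hacc (fun n => G (u n)) hmono
  have h1 := hN (N + 1) (Nat.le_succ N)
  have h2 := hg2 (u N)
  rw [← hstep] at h2
  exact h2 h1

lemma mulPowAux (a r : R) : ∀ k : ℕ, (a * r) ^ (k + 1) = a * ((r * a) ^ k * r) := by
  intro k
  induction k with
  | zero => simp
  | succ k ih =>
    rw [pow_succ', ih, pow_succ']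
    simp only [mul_assoc]

/-- stabilization of annihilators of powers -/
lemma powStab (hacc : AccLeftAnn R) (y : R) :
    ∃ n : ℕ, 1 ≤ n ∧ ∀ m, n ≤ m → lAnnIdeal R {y ^ m} = lAnnIdeal R {y ^ n} := by
  have hmono : ∀ k, lAnnIdeal R ({y ^ (k + 1)} : Set R) ≤ lAnnIdeal R {y ^ (k + 2)} := by
    intro k c hc x hx
    rw [Set.mem_singleton_iff] at hx
    subst hx
    have := hc (y ^ (k + 1)) rfl
    rw [pow_succ, ← mul_assoc, this, zero_mul]
  obtain ⟨N, hN⟩ := hacc (fun k => {y ^ (k + 1)}) hmono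
  refine ⟨N + 1, Nat.le_add_left 1 N, ?_⟩
  intro m hm
  obtain ⟨m', rfl⟩ := Nat.exists_eq_add_of_le hm
  have := hN (N + m') (Nat.le_add_right N m')
  simpa [Nat.add_right_comm N m' 1] using this

end Aux
section Aux2

variable {R : Type u} [Ring R]

/-- In a semiprime ring with ACC on left annihilators, every nonzero left ideal
contains a non-nilpotent element. -/
lemma lemN (hsp : IsSemiprimeRing R) (hacc : AccLeftAnn R) (J : Ideal R) (hJ : J ≠ ⊥) :
    ∃ y ∈ J, ∀ n : ℕ, 1 ≤ n → y ^ n ≠ 0 := by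
  by_contra hcon
  push_neg at hcon
  -- every element of J is nilpotent
  have hnil : ∀ y ∈ J, ∃ n : ℕ, 1 ≤ n ∧ y ^ n = 0 := by
    intro y hy
    obtain ⟨n, hn1, hn2⟩ := hcon y hy
    exact ⟨n, hn1, hn2⟩
  -- the set P
  set P : Set R := {y | y ≠ 0 ∧ (y ∈ J ∨ ∃ x ∈ J, ∃ r : R, y = x * r)} with hP
  obtain ⟨y0, hy0J, hy00⟩ := (Submodule.ne_bot_iff J).1 hJ
  have hPne : Nonempty P := ⟨⟨y0, hy00, Or.inl hy0J⟩⟩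
  -- every element of P is nilpotent
  have hPnil : ∀ y ∈ P, ∃ n : ℕ, 1 ≤ n ∧ y ^ n = 0 := by
    rintro y ⟨hy0, hy⟩
    rcases hy with hyJ | ⟨x, hxJ, r, rfl⟩
    · exact hnil y hyJ
    · have hrx : r * x ∈ J := J.smul_mem r hxJ
      obtain ⟨n, hn1, hn2⟩ := hnil _ hrx
      exact ⟨n + 1, le_add_self, by rw [mulPowAux, hn2, zero_mul, mul_zero]⟩
  -- pick maximal annihilator
  obtain ⟨⟨a, ha0, haP⟩, hmax⟩ := maxAnn (α := P) hacc (fun y => ({(y : R)} : Set R))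
  -- semiprime: ∃ r, a * r * a ≠ 0
  have : ¬ ∀ r : R, a * r * a = 0 := fun h => ha0 (hsp a h)
  push_neg at this
  obtain ⟨r, hr⟩ := this
  set x : R := a * r with hx
  have hxP : x ∈ P := by
    refine ⟨fun h => hr (by rw [← hx] at *; rw [h, zero_mul]), ?_⟩
    rcases haP with haJ | ⟨x1, hx1J, r1, ha⟩
    · exact Or.inr ⟨a, haJ, r, rfl⟩
    · exact Or.inr ⟨x1, hx1J, r1 * r, by rw [hx, ha, mul_assoc]⟩
  have hxa : x * a ≠ 0 := by rw [hx]; exact hr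
  have hla : lAnnIdeal R ({a} : Set R) ≤ lAnnIdeal R ({x} : Set R) := by
    intro c hc z hz
    rw [Set.mem_singleton_iff] at hz; subst hz
    have := hc a rfl
    rw [hx, ← mul_assoc, this, zero_mul]
  have heq : lAnnIdeal R ({x} : Set R) = lAnnIdeal R ({a} : Set R) :=
    hmax ⟨x, hxP⟩ hla
  -- x is nilpotent
  obtain ⟨n, hn1, hn2⟩ := hPnil x hxP
  -- minimal m with x^m * a = 0
  have hex : ∃ m : ℕ, x ^ m * a = 0 := ⟨n, by rw [hn2, zero_mul]⟩
  classical
  set m := Nat.find hex with hm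
  have hm0 : x ^ m * a = 0 := Nat.find_spec hex
  have hmlt : ∀ k, k < m → x ^ k * a ≠ 0 := fun k hk => Nat.find_min hex hk
  have hm2 : 2 ≤ m := by
    rcases Nat.lt_or_ge m 2 with h | h
    · interval_cases m
      · exact absurd (by simpa using hm0) ha0
      · exact absurd (by simpa using hm0) hxa
    · exact h
  set b : R := x ^ (m - 1) * a with hb
  have hb0 : b ≠ 0 := hmlt (m - 1) (Nat.sub_lt (by omega) one_pos)
  have hbP : b ∈ P := by
    refine ⟨hb0, ?_⟩
    rcases haP with haJ | ⟨x1, hx1J, r1, ha⟩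
    · exact Or.inl (J.smul_mem _ haJ)
    · refine Or.inr ⟨x ^ (m - 1) * x1, J.smul_mem _ hx1J, r1, by rw [hb, ha, mul_assoc]⟩
  have hlb : lAnnIdeal R ({a} : Set R) ≤ lAnnIdeal R ({b} : Set R) := by
    intro c hc z hz
    rw [Set.mem_singleton_iff] at hz; subst hz
    have hca := hc a rfl
    obtain ⟨k, hk⟩ : ∃ k, m - 1 = k + 1 := ⟨m - 2, by omega⟩
    rw [hb, hk, hx, mulPowAux, ← mul_assoc, ← mul_assoc, hca]
    simp
  have heqb : lAnnIdeal R ({b} : Set R) = lAnnIdeal R ({a} : Set R) :=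
    hmax ⟨b, hbP⟩ hlb
  -- x * b = x^m * a = 0
  have hxb : x * b = 0 := by
    rw [hb, ← mul_assoc, ← pow_succ']
    obtain ⟨k, hk⟩ : ∃ k, m = k + 1 := ⟨m - 1, by omega⟩
    rw [hk]; simpa [hk] using hm0
  have : x ∈ lAnnIdeal R ({a} : Set R) := by
    rw [← heqb]
    intro z hz; rw [Set.mem_singleton_iff] at hz; subst hz; exact hxb
  exact hxa (this a rfl)

/-- elements with essential left annihilator are nilpotent -/
lemma nilLemma (hacc : AccLeftAnn R)
    {y : R} (hy : IsEssentialLeftIdeal (lAnnIdeal R ({y} : Set R))) :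
    ∃ n : ℕ, 1 ≤ n ∧ y ^ n = 0 := by
  obtain ⟨n, hn1, hstab⟩ := powStab hacc y
  refine ⟨n, hn1, ?_⟩
  by_contra hyn
  have hesspow : IsEssentialLeftIdeal (lAnnIdeal R ({y ^ n} : Set R)) := by
    refine essMono ?_ hy
    intro c hc z hz
    rw [Set.mem_singleton_iff] at hz; subst hz
    have := hc y rfl
    obtain ⟨k, hk⟩ : ∃ k, n = k + 1 := ⟨n - 1, by omega⟩
    rw [hk, pow_succ', ← mul_assoc, this, zero_mul]
  obtain ⟨s, hsmem, hs0⟩ := essElem.1 hesspow (y ^ n) hyn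
  have h1 : s * y ^ n * y ^ n = 0 := hsmem (y ^ n) rfl
  have h2 : s ∈ lAnnIdeal R ({y ^ (n + n)} : Set R) := by
    intro z hz; rw [Set.mem_singleton_iff] at hz; subst hz
    rw [pow_add, ← mul_assoc]; exact h1
  rw [hstab (n + n) (Nat.le_add_right n n)] at h2
  exact hs0 (h2 (y ^ n) rfl)

/-- the left singular ideal is zero: semiprime + ACC -/
lemma lemC (hsp : IsSemiprimeRing R) (hacc : AccLeftAnn R)
    {x : R} (hx : IsEssentialLeftIdeal (lAnnIdeal R ({x} : Set R))) : x = 0 := by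
  by_contra hx0
  -- the singular set is a left ideal
  set Z : Ideal R :=
    { carrier := {y | IsEssentialLeftIdeal (lAnnIdeal R ({y} : Set R))}
      add_mem' := by
        intro a b ha hb
        refine essMono ?_ (essInf' ha hb)
        intro c hc z hz
        rw [Set.mem_singleton_iff] at hz; subst hz
        rw [mul_add, hc.1 a rfl, hc.2 b rfl, add_zero]
      zero_mem' := by
        intro I hI h
        apply hI
        rw [eq_bot_iff] at h ⊢
        refine le_trans ?_ h
        intro z hz
        exact ⟨fun w hw => by rw [Set.mem_singleton_iff] at hw; rw [hw, mul_zero], hz⟩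
      smul_mem' := by
        intro r a ha
        have := essComap (M := lAnnIdeal R ({a} : Set R)) ha r
        refine essMono ?_ this
        intro c hc z hz
        rw [Set.mem_singleton_iff] at hz; subst hz
        have : c * r * a = 0 := hc a rfl
        rw [smul_eq_mul, ← mul_assoc]; exact this } with hZ
  have hxZ : x ∈ Z := hx
  have hZne : Z ≠ ⊥ := by
    intro h
    exact hx0 (by rw [← Submodule.mem_bot (R := R), ← h]; exact hxZ)
  obtain ⟨y, hyZ, hynn⟩ := lemN hsp hacc Z hZne
  obtain ⟨n, hn1, hn2⟩ := nilLemma hacc (show IsEssentialLeftIdeal _ from hyZ)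
  exact hynn n hn1 hn2

end Aux2
section Aux3

variable {R : Type u} [Ring R]

open Finset in
/-- independence from a finite-sum vanishing condition -/
lemma H1 (p : ℕ → Ideal R)
    (hsum : ∀ (G : Finset ℕ) (e : ℕ → R), (∀ k ∈ G, e k ∈ p k) →
      (∑ k ∈ G, e k) = 0 → ∀ k ∈ G, e k = 0) : iSupIndep p := by
  classical
  rw [iSupIndep_def]
  intro i
  rw [Submodule.disjoint_def]
  intro x hxi hxsup
  rw [iSup_subtype'] at hxsup
  have key : ∃ (F : Finset ℕ) (g : ℕ → R), i ∉ F ∧ (∀ j ∈ F, g j ∈ p j) ∧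
      (∑ j ∈ F, g j) = x := by
    refine Submodule.iSup_induction (motive := fun a => ∃ (F : Finset ℕ) (g : ℕ → R),
      i ∉ F ∧ (∀ j ∈ F, g j ∈ p j) ∧ (∑ j ∈ F, g j) = a) _ hxsup ?_ ?_ ?_
    · rintro ⟨j, hj⟩ a ha
      exact ⟨{j}, fun _ => a, by simpa using (Ne.symm hj), by simpa using ha, by simp⟩
    · exact ⟨∅, fun _ => 0, by simp, by simp, by simp⟩
    · rintro a b ⟨F1, g1, hi1, hg1, hs1⟩ ⟨F2, g2, hi2, hg2, hs2⟩
      refine ⟨F1 ∪ F2, fun j => (if j ∈ F1 then g1 j else 0) + (if j ∈ F2 then g2 j else 0),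
        by simp [hi1, hi2], ?_, ?_⟩
      · intro j hj
        apply (p j).add_mem
        · split <;> simp_all
        · split <;> simp_all
      · rw [sum_add_distrib]
        rw [sum_ite_mem, sum_ite_mem, union_inter_cancel_left, union_inter_cancel_right,
          hs1, hs2]
  obtain ⟨F, g, hiF, hgF, hgs⟩ := key
  have := hsum (insert i F) (fun j => if j = i then -x else g j) ?_ ?_ i (mem_insert_self i F)
  · simpa using this
  · intro k hk
    rcases mem_insert.1 hk with rfl | hkF
    · simpa using (p k).neg_mem hxi
    · have : k ≠ i := fun h => hiF (h ▸ hkF)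
      simpa [this] using hgF k hkF
  · rw [sum_insert hiF]
    simp only [if_pos rfl]
    have : ∀ j ∈ F, (if j = i then -x else g j) = g j := by
      intro j hj
      have : j ≠ i := fun h => hiF (h ▸ hj)
      simp [this]
    rw [sum_congr rfl this, hgs]
    simp

end Aux3
section Aux4

variable {R : Type u} [Ring R]

open Finset in
lemma Bsum (t : R) (hreg : ∀ x : R, x * t = 0 → x = 0) (J : Ideal R)
    (hdisj : Ideal.span ({t} : Set R) ⊓ J = ⊥) :
    ∀ (G : Finset ℕ) (e : ℕ → R),
      (∀ k ∈ G, ∃ b ∈ J, b * t ^ k = e k) → (∑ k ∈ G, e k) = 0 → ∀ k ∈ G, e k = 0 := by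
  classical
  have hregpow : ∀ (k : ℕ) (x : R), x * t ^ k = 0 → x = 0 := by
    intro k
    induction k with
    | zero => intro x hx; simpa using hx
    | succ k ih =>
      intro x hx
      rw [pow_succ, ← mul_assoc] at hx
      exact ih _ (hreg _ hx)
  intro G
  induction G using Finset.strongInductionOn with
  | _ G ih =>
    intro e he hsum0 k hk
    have hne : G.Nonempty := ⟨k, hk⟩
    set m := G.min' hne with hmdef
    have hmG : m ∈ G := G.min'_mem hne
    choose bfun hbJ hbe using he
    set b : ℕ → R := fun j => if h : j ∈ G then bfun j h else 0 with hbdef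
    have hbJ' : ∀ j ∈ G, b j ∈ J := by
      intro j hj; rw [hbdef]; simp only [dif_pos hj]; exact hbJ j hj
    have hbe' : ∀ j ∈ G, b j * t ^ j = e j := by
      intro j hj; rw [hbdef]; simp only [dif_pos hj]; exact hbe j hj
    have hfac : ∀ j ∈ G, e j = (b j * t ^ (j - m)) * t ^ m := by
      intro j hj
      rw [mul_assoc, ← pow_add]
      have : j - m + m = j := Nat.sub_add_cancel (G.min'_le j hj)
      rw [this, hbe' j hj]
    have hs : (∑ j ∈ G, b j * t ^ (j - m)) * t ^ m = 0 := by
      rw [sum_mul, ← hsum0]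
      exact sum_congr rfl fun j hj => (hfac j hj).symm
    have hs2 : ∑ j ∈ G, b j * t ^ (j - m) = 0 := hregpow m _ hs
    have hbm : b m = - ∑ j ∈ G.erase m, b j * t ^ (j - m) := by
      have h1 : b m * t ^ (m - m) + ∑ j ∈ G.erase m, b j * t ^ (j - m) = 0 := by
        rw [add_sum_erase G (fun j => b j * t ^ (j - m)) hmG]
        exact hs2
      have h2 : b m * t ^ (m - m) = b m := by simp
      rw [h2] at h1
      exact eq_neg_of_add_eq_zero_left h1
    have hbmspan : b m ∈ Ideal.span ({t} : Set R) := by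
      rw [hbm]
      apply neg_mem
      apply Submodule.sum_mem
      intro j hj
      have hjm : j ≠ m := (mem_erase.1 hj).1
      have hjG : j ∈ G := (mem_erase.1 hj).2
      have hjlt : m < j := lt_of_le_of_ne (G.min'_le j hjG) (Ne.symm hjm)
      have : j - m = (j - m - 1) + 1 := by omega
      rw [this, pow_succ, ← mul_assoc]
      exact Submodule.mem_span_singleton.2 ⟨b j * t ^ (j - m - 1), rfl⟩
    have hbm0 : b m = 0 := by
      have : b m ∈ Ideal.span ({t} : Set R) ⊓ J := ⟨hbmspan, hbJ' m hmG⟩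
      rw [hdisj] at this
      simpa using this
    have hem : e m = 0 := by rw [← hbe' m hmG, hbm0, zero_mul]
    by_cases hkm : k = m
    · rw [hkm]; exact hem
    · have herase : ∑ j ∈ G.erase m, e j = 0 := by
        have h3 := add_sum_erase G e hmG
        rw [hem, zero_add] at h3
        rw [h3]; exact hsum0
      exact ih (G.erase m) (erase_ssubset hmG) e
        (fun j hj => ⟨b j, hbJ' j (mem_of_mem_erase hj), hbe' j (mem_of_mem_erase hj)⟩)
        herase k (mem_erase.2 ⟨hkm, hk⟩)

lemma spanEss (hud : FinUdim R) {t : R} (hreg : ∀ x : R, x * t = 0 → x = 0) :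
    IsEssentialLeftIdeal (Ideal.span ({t} : Set R)) := by
  have hregpow : ∀ (k : ℕ) (x : R), x * t ^ k = 0 → x = 0 := by
    intro k
    induction k with
    | zero => intro x hx; simpa using hx
    | succ k ih =>
      intro x hx
      rw [pow_succ, ← mul_assoc] at hx
      exact ih _ (hreg _ hx)
  intro J hJ
  by_contra hdisj
  apply hud
  refine ⟨fun k => Submodule.map (LinearMap.toSpanSingleton R R (t ^ k)) J, ?_, ?_⟩
  · intro k
    obtain ⟨x, hxJ, hx0⟩ := (Submodule.ne_bot_iff J).1 hJ
    rw [Submodule.ne_bot_iff]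
    refine ⟨x * t ^ k, Submodule.mem_map.2 ⟨x, hxJ, by
      rw [LinearMap.toSpanSingleton_apply, smul_eq_mul]⟩, fun h => hx0 (hregpow k x h)⟩
  · apply H1
    intro G e he hsum0
    refine Bsum t hreg J hdisj G e ?_ hsum0
    intro k hk
    obtain ⟨bb, hbb, hbe⟩ := Submodule.mem_map.1 (he k hk)
    rw [LinearMap.toSpanSingleton_apply, smul_eq_mul] at hbe
    exact ⟨bb, hbb, hbe⟩

lemma leftRegReg (hsp : IsSemiprimeRing R) (hg : IsLeftGoldie R) {t : R}
    (hreg : ∀ x : R, x * t = 0 → x = 0) : Reg t := by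
  refine ⟨hreg, ?_⟩
  intro x hx
  apply lemC hsp hg.1
  refine essMono ?_ (spanEss hg.2 hreg)
  rw [Ideal.span_le]
  intro z hz
  rw [Set.mem_singleton_iff] at hz; subst hz
  intro w hw
  rw [Set.mem_singleton_iff] at hw; subst hw
  exact hx

end Aux4
section Aux5

variable {R : Type u} [Ring R]

open Finset in
lemma cKill (c : ℕ → R) (G : Finset ℕ)
    (hlt : ∀ i ∈ G, ∀ j ∈ G, i < j → c j * c i = 0)
    (hst : ∀ i ∈ G, ∀ y : R, y * c i * c i = 0 → y * c i = 0) :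
    ∀ (r : ℕ → R), (∑ k ∈ G, r k * c k) = 0 → ∀ k ∈ G, r k * c k = 0 := by
  classical
  induction G using Finset.strongInductionOn with
  | _ G ih =>
    intro r hsum0 k hk
    have hne : G.Nonempty := ⟨k, hk⟩
    set m := G.min' hne with hmdef
    have hmG : m ∈ G := G.min'_mem hne
    have hs : ∑ j ∈ G, r j * c j * c m = 0 := by
      rw [← sum_mul, hsum0, zero_mul]
    have hterm : ∀ j ∈ G, j ≠ m → r j * c j * c m = 0 := by
      intro j hj hjm
      have : m < j := lt_of_le_of_ne (G.min'_le j hj) (Ne.symm hjm)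
      rw [mul_assoc, hlt m hmG j hj this, mul_zero]
    have hsm : r m * c m * c m = 0 := by
      rw [← add_sum_erase G (fun j => r j * c j * c m) hmG] at hs
      have : ∑ j ∈ G.erase m, r j * c j * c m = 0 :=
        sum_eq_zero fun j hj => hterm j (mem_of_mem_erase hj) (mem_erase.1 hj).1
      rw [this, add_zero] at hs
      exact hs
    have hrm : r m * c m = 0 := hst m hmG _ hsm
    by_cases hkm : k = m
    · rw [hkm]; exact hrm
    · have herase : ∑ j ∈ G.erase m, r j * c j = 0 := by
        have h3 := add_sum_erase G (fun j => r j * c j) hmG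
        simp only [hrm, zero_add] at h3
        rw [h3]; exact hsum0
      exact ih (G.erase m) (erase_ssubset hmG)
        (fun i hi j hj => hlt i (mem_of_mem_erase hi) j (mem_of_mem_erase hj))
        (fun i hi => hst i (mem_of_mem_erase hi)) r herase k (mem_erase.2 ⟨hkm, hk⟩)

lemma extendStep (hsp : IsSemiprimeRing R) (hacc : AccLeftAnn R)
    {E : Ideal R} (hessE : IsEssentialLeftIdeal E) (A : Ideal R) (hA : A ≠ ⊥) :
    ∃ d : R, d ∈ E ∧ d ∈ A ∧ d ≠ 0 ∧ ∀ y : R, y * d * d = 0 → y * d = 0 := by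
  have hJ : E ⊓ A ≠ ⊥ := hessE A hA
  obtain ⟨y, hyJ, hynn⟩ := lemN hsp hacc _ hJ
  obtain ⟨n, hn1, hstab⟩ := powStab hacc y
  have hpowmem : y ^ n ∈ E ⊓ A := by
    obtain ⟨k, hk⟩ : ∃ k, n = k + 1 := ⟨n - 1, by omega⟩
    rw [hk, pow_succ]
    exact Submodule.smul_mem _ (y ^ k) hyJ
  refine ⟨y ^ n, hpowmem.1, hpowmem.2, hynn n hn1, ?_⟩
  intro z hz
  have : z ∈ lAnnIdeal R ({y ^ (n + n)} : Set R) := by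
    intro w hw; rw [Set.mem_singleton_iff] at hw; subst hw
    rw [pow_add, ← mul_assoc]; exact hz
  rw [hstab (n + n) (Nat.le_add_right n n)] at this
  exact this (y ^ n) rfl

open Finset in
/-- Goldie: an essential left ideal contains a left-regular element -/
lemma lemD (hsp : IsSemiprimeRing R) (hg : IsLeftGoldie R)
    {E : Ideal R} (hessE : IsEssentialLeftIdeal E) :
    ∃ c : R, c ∈ E ∧ ∀ x : R, x * c = 0 → x = 0 := by
  classical
  by_cases htriv : Subsingleton R
  · exact ⟨0, E.zero_mem, fun x _ => Subsingleton.elim x 0⟩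
  have : Nontrivial R := not_subsingleton_iff_nontrivial.1 htriv
  by_contra hno
  push_neg at hno
  -- choice function
  have hstep : ∀ A : Ideal R, ∃ d : R, A ≠ ⊥ →
      (d ∈ E ∧ d ∈ A ∧ d ≠ 0 ∧ ∀ y : R, y * d * d = 0 → y * d = 0) := by
    intro A
    by_cases h : A ≠ ⊥
    · obtain ⟨d, h1, h2, h3, h4⟩ := extendStep hsp hg.1 hessE A h
      exact ⟨d, fun _ => ⟨h1, h2, h3, h4⟩⟩
    · exact ⟨0, fun h' => absurd h' h⟩
  choose stepf hstepf using hstep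
  set B : ℕ → Ideal R := fun n =>
    Nat.rec ⊤ (fun _ Bk => Bk ⊓ lAnnIdeal R ({stepf Bk} : Set R)) n with hB
  set c : ℕ → R := fun n => stepf (B n) with hc
  have hBsucc : ∀ n, B (n + 1) = B n ⊓ lAnnIdeal R ({c n} : Set R) := fun n => rfl
  have hBanti : ∀ i k, i ≤ k → B k ≤ B i := by
    intro i k hik
    induction k with
    | zero => have : i = 0 := Nat.le_zero.1 hik; rw [this]
    | succ k ihk =>
      rcases Nat.lt_or_ge i (k + 1) with h | h
      · exact le_trans (by rw [hBsucc]; exact inf_le_left) (ihk (Nat.lt_succ_iff.1 h))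
      · have : i = k + 1 := le_antisymm hik h
        rw [this]
  -- all the B n are nonzero
  have hBne : ∀ n, B n ≠ ⊥ := by
    intro n
    induction n with
    | zero =>
      intro h
      have h1 : (1 : R) ∈ B 0 := trivial
      rw [h] at h1
      exact one_ne_zero ((Submodule.mem_bot R).1 h1)
    | succ n ihn =>
      intro hbot
      -- for i ≤ n the element c i has all the good properties
      have hci : ∀ i, i ≤ n → c i ∈ E ∧ c i ∈ B i ∧ c i ≠ 0 ∧
          ∀ y : R, y * c i * c i = 0 → y * c i = 0 :=
        fun i hi => hstepf (B i) (fun h => ihn (eq_bot_iff.2 (h ▸ hBanti i n hi)))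
      set csum := ∑ i ∈ range (n + 1), c i with hcsum
      have hcsumE : csum ∈ E :=
        Submodule.sum_mem _ fun i hi => (hci i (Nat.lt_succ_iff.1 (mem_range.1 hi))).1
      obtain ⟨x, hx0, hxne⟩ := hno csum hcsumE
      have hxc : ∀ i ∈ range (n + 1), x * c i = 0 := by
        intro i hi
        exact cKill c (range (n + 1))
          (fun i hi j hj hij => by
            have hjn : j ≤ n := Nat.lt_succ_iff.1 (mem_range.1 hj)
            have hcj := (hci j hjn).2.1
            have : c j ∈ B (i + 1) := hBanti (i + 1) j hij hcj
            rw [hBsucc] at this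
            exact this.2 (c i) rfl)
          (fun i hi => (hci i (Nat.lt_succ_iff.1 (mem_range.1 hi))).2.2.2)
          (fun _ => x)
          (by rw [← mul_sum, ← hcsum, hx0]) i hi
      have hxB : x ∈ B (n + 1) := by
        have : ∀ m, m ≤ n + 1 → x ∈ B m := by
          intro m
          induction m with
          | zero => intro _; trivial
          | succ m ihm =>
            intro hm
            rw [hBsucc]
            refine ⟨ihm (by omega), ?_⟩
            intro w hw; rw [Set.mem_singleton_iff] at hw; subst hw
            exact hxc m (mem_range.2 (by omega))
        exact this (n + 1) le_rfl
      rw [hbot] at hxB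
      exact hxne ((Submodule.mem_bot R).1 hxB)
  -- now we have an infinite independent family, contradiction with FinUdim
  have hci : ∀ i, c i ∈ E ∧ c i ∈ B i ∧ c i ≠ 0 ∧
      ∀ y : R, y * c i * c i = 0 → y * c i = 0 := fun i => hstepf (B i) (hBne i)
  apply hg.2
  refine ⟨fun n => Ideal.span ({c n} : Set R), ?_, ?_⟩
  · intro n
    rw [Submodule.ne_bot_iff]
    exact ⟨c n, Ideal.subset_span rfl, (hci n).2.2.1⟩
  · apply H1
    intro G e he hsum0 k hk
    have hcoef : ∀ j ∈ G, ∃ rr : R, rr * c j = e j := by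
      intro j hj
      obtain ⟨rr, hrr⟩ := Submodule.mem_span_singleton.1 (he j hj)
      exact ⟨rr, by rw [← hrr, smul_eq_mul]⟩
    choose rfun hrfun using hcoef
    set rr : ℕ → R := fun j => if h : j ∈ G then rfun j h else 0 with hrr
    have hre : ∀ j ∈ G, rr j * c j = e j := by
      intro j hj; rw [hrr]; simp only [dif_pos hj]; exact hrfun j hj
    have := cKill c G
      (fun i _ j _ hij => by
        have hcj := (hci j).2.1
        have : c j ∈ B (i + 1) := hBanti (i + 1) j hij hcj
        rw [hBsucc] at this
        exact this.2 (c i) rfl)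
      (fun i _ => (hci i).2.2.2) rr
      (by rw [sum_congr rfl hre]; exact hsum0) k hk
    rw [hre k hk] at this
    exact this

end Aux5
section Aux6

variable {R : Type u} [Ring R]

/-- ACC on left annihilators passes to subrings -/
lemma accSubring (hacc : AccLeftAnn R) (T : Subring R) : AccLeftAnn ↥T := by
  intro X hX
  set A : ℕ → Set R := fun n => (fun t : ↥T => (t : R)) '' ((lAnnIdeal ↥T (X n) : Ideal ↥T) : Set ↥T)
    with hA
  set Y : ℕ → Set R := fun n => {z : R | ∀ a ∈ A n, a * z = 0} with hY
  have hAmono : ∀ n, A n ⊆ A (n + 1) := by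
    intro n a ha
    obtain ⟨t, ht, rfl⟩ := ha
    exact ⟨t, hX n ht, rfl⟩
  have hmono : ∀ n, lAnnIdeal R (Y n) ≤ lAnnIdeal R (Y (n + 1)) := by
    intro n
    apply lAnn_antitone
    intro z hz a ha
    exact hz a (hAmono n ha)
  obtain ⟨N, hN⟩ := hacc Y hmono
  refine ⟨N, ?_⟩
  intro m hm
  apply le_antisymm
  · intro t ht x hx
    have h1 : (t : R) ∈ lAnnIdeal R (Y m) := fun z hz => hz _ ⟨t, ht, rfl⟩
    rw [hN m hm] at h1
    have h2 : ((x : ↥T) : R) ∈ Y N := by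
      rintro a ⟨s, hs, rfl⟩
      show (s : R) * ((x : ↥T) : R) = 0
      have h4 := congrArg (fun w : ↥T => (w : R)) (hs x hx)
      push_cast at h4
      exact h4
    have h3 := h1 _ h2
    exact_mod_cast h3
  · -- the easy direction: chain is increasing
    have step : ∀ i j, i ≤ j → lAnnIdeal ↥T (X i) ≤ lAnnIdeal ↥T (X j) := by
      intro i j hij
      induction j with
      | zero => have : i = 0 := Nat.le_zero.1 hij; rw [this]
      | succ j ihj =>
        rcases Nat.lt_or_ge i (j + 1) with h | h
        · exact le_trans (ihj (Nat.lt_succ_iff.1 h)) (hX j)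
        · have : i = j + 1 := le_antisymm hij h
          rw [this]
    exact step N m hm

variable (T : Subring R) (L : Ideal R)

/-- the left ideal of `R` generated by `L * I`, for `I` a left ideal of `T` -/
def phiIdeal (I : Ideal ↥T) : Ideal R where
  carrier := (AddSubgroup.closure {r : R | ∃ l ∈ L, ∃ x ∈ I, r = l * ((x : ↥T) : R)} :
    AddSubgroup R)
  add_mem' := by intro a b ha hb; exact AddSubgroup.add_mem _ ha hb
  zero_mem' := AddSubgroup.zero_mem _
  smul_mem' := by
    intro rr a ha
    simp only [smul_eq_mul, SetLike.mem_coe] at *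
    induction ha using AddSubgroup.closure_induction with
    | mem x hx =>
      obtain ⟨l, hl, x1, hx1, rfl⟩ := hx
      apply AddSubgroup.subset_closure
      exact ⟨rr * l, L.smul_mem rr hl, x1, hx1, by rw [mul_assoc]⟩
    | zero => rw [mul_zero]; exact AddSubgroup.zero_mem _
    | add x y hx hy ihx ihy => rw [mul_add]; exact AddSubgroup.add_mem _ ihx ihy
    | neg x hx ihx => rw [mul_neg]; exact AddSubgroup.neg_mem _ ihx

lemma phiIdeal_le {I : Ideal ↥T} (hLT : (L : Set R) ⊆ (T : Set R)) :
    ∀ a ∈ phiIdeal T L I, ∃ t : ↥T, t ∈ I ∧ (t : R) = a := by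
  intro a ha
  have ha' : a ∈ AddSubgroup.closure {r : R | ∃ l ∈ L, ∃ x ∈ I, r = l * ((x : ↥T) : R)} := ha
  clear ha
  induction ha' using AddSubgroup.closure_induction with
  | mem x hx =>
    obtain ⟨l, hl, x1, hx1, rfl⟩ := hx
    exact ⟨⟨l, hLT hl⟩ * x1, I.smul_mem _ hx1, rfl⟩
  | zero => exact ⟨0, I.zero_mem, by simp⟩
  | add x y hx hy ihx ihy =>
    obtain ⟨t1, ht1, rfl⟩ := ihx
    obtain ⟨t2, ht2, rfl⟩ := ihy
    exact ⟨t1 + t2, I.add_mem ht1 ht2, by push_cast; ring_nf⟩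
  | neg x hx ihx =>
    obtain ⟨t1, ht1, rfl⟩ := ihx
    exact ⟨-t1, I.neg_mem ht1, by push_cast; ring_nf⟩

lemma phiIdeal_ne_bot {I : Ideal ↥T} (hr : RAnnZero R (L : Set R)) (hI : I ≠ ⊥) :
    phiIdeal T L I ≠ ⊥ := by
  obtain ⟨x, hxI, hx0⟩ := (Submodule.ne_bot_iff I).1 hI
  have hxR : ((x : ↥T) : R) ≠ 0 := by
    intro h
    exact hx0 (by exact_mod_cast h)
  have : ¬ ∀ l ∈ L, l * ((x : ↥T) : R) = 0 := fun h => hxR (hr _ h)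
  push_neg at this
  obtain ⟨l, hl, hlx⟩ := this
  rw [Submodule.ne_bot_iff]
  refine ⟨l * ((x : ↥T) : R), ?_, hlx⟩
  exact AddSubgroup.subset_closure ⟨l, hl, x, hxI, rfl⟩

open Finset in
lemma finUdimSubring (hud : FinUdim R) (hLT : (L : Set R) ⊆ (T : Set R))
    (hr : RAnnZero R (L : Set R)) : FinUdim ↥T := by
  classical
  rintro ⟨f, hf0, hfind⟩
  apply hud
  refine ⟨fun n => phiIdeal T L (f n), fun n => phiIdeal_ne_bot T L hr (hf0 n), ?_⟩
  apply H1
  intro G e he hsum0 k hk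
  have hcoef : ∀ j ∈ G, ∃ t : ↥T, t ∈ f j ∧ (t : R) = e j :=
    fun j hj => phiIdeal_le T L hLT (e j) (he j hj)
  choose tfun htmem htval using hcoef
  set tt : ℕ → ↥T := fun j => if h : j ∈ G then tfun j h else 0 with htt
  have httmem : ∀ j ∈ G, tt j ∈ f j := by
    intro j hj; rw [htt]; simp only [dif_pos hj]; exact htmem j hj
  have httval : ∀ j ∈ G, ((tt j : ↥T) : R) = e j := by
    intro j hj; rw [htt]; simp only [dif_pos hj]; exact htval j hj
  have hsumT : ∑ j ∈ G, tt j = 0 := by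
    have : ((∑ j ∈ G, tt j : ↥T) : R) = 0 := by
      push_cast
      rw [Finset.sum_congr rfl httval]
      exact hsum0
    exact_mod_cast this
  have htk : tt k = 0 := by
    have h1 : tt k = - ∑ j ∈ G.erase k, tt j := by
      have h2 := add_sum_erase G tt hk
      rw [hsumT] at h2
      exact eq_neg_of_add_eq_zero_left h2
    have h3 : tt k ∈ (⨆ j, ⨆ (_ : j ≠ k), f j : Ideal ↥T) := by
      rw [h1]
      apply neg_mem
      apply Submodule.sum_mem
      intro j hj
      have : f j ≤ ⨆ j, ⨆ (_ : j ≠ k), f j :=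
        le_iSup₂ (f := fun (j : ℕ) (_ : j ≠ k) => f j) j (Finset.mem_erase.1 hj).1
      exact this (httmem j (Finset.mem_of_mem_erase hj))
    have hd := iSupIndep_def.1 hfind k
    exact Submodule.disjoint_def.1 hd _ (httmem k hk) h3
  rw [← httval k hk, htk]
  simp

end Aux6

section Final

/-- If `R` is a semiprime left Goldie ring and `T` is a subring containing an
essential left ideal `L` of `R` with zero right annihilator, then `T` is a
semiprime left Goldie ring and the classical left quotient rings of `T` and
`R` coincide. -/
theorem stmt8 {R : Type u} [Ring R] (hsp : IsSemiprimeRing R) (hg : IsLeftGoldie R)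
    (T : Subring R) (L : Ideal R) (hLT : (L : Set R) ⊆ (T : Set R))
    (hess : IsEssentialLeftIdeal L) (hr : RAnnZero R (L : Set R)) :
    IsSemiprimeRing ↥T ∧ IsLeftGoldie ↥T ∧
    ∀ (Q : Type v) [Ring Q] (ι : R →+* Q), IsLeftQuotRing ι →
      IsLeftQuotRing (ι.comp T.subtype) := by
  refine ⟨?_, ⟨accSubring hg.1 T, finUdimSubring T L hg.2 hLT hr⟩, ?_⟩
  · -- semiprime
    intro a ha
    have key : ∀ l ∈ L, l * ((a : ↥T) : R) = 0 := by
      intro l hl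
      apply hsp (l * ((a : ↥T) : R))
      intro r
      have hrl : r * l ∈ L := L.smul_mem r hl
      have h5 := ha ⟨r * l, hLT hrl⟩
      have h6 : (a : R) * (r * l) * (a : R) = 0 := by
        have h5' := congrArg (fun w : ↥T => (w : R)) h5
        push_cast at h5'
        exact h5'
      calc l * ((a : ↥T) : R) * r * (l * ((a : ↥T) : R))
          = l * ((a : R) * (r * l) * (a : R)) := by
            simp only [mul_assoc]
        _ = 0 := by rw [h6, mul_zero]
    have h7 : ((a : ↥T) : R) = 0 := hr _ key
    exact_mod_cast h7
  · -- quotient rings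
    intro Q _ ι hQ
    -- regular elements of T are regular in R
    have hTreg : ∀ a : ↥T, Reg a → Reg ((a : ↥T) : R) := by
      intro a ⟨hal, _har⟩
      apply leftRegReg hsp hg
      intro y hy
      by_contra hy0
      obtain ⟨r, hrL, hr0⟩ := essElem.1 hess y hy0
      have h1 : (⟨r * y, hLT hrL⟩ : ↥T) * a = 0 := by
        apply Subtype.ext
        show (r * y) * ((a : ↥T) : R) = 0
        rw [mul_assoc, hy, mul_zero]
      have h2 := congrArg Subtype.val (hal _ h1)
      exact hr0 h2
    refine { inj := ?_, unit := ?_, frac := ?_ }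
    · exact fun x y h => Subtype.coe_injective (hQ.inj h)
    · intro a hreg
      exact hQ.unit _ (hTreg a hreg)
    · intro q
      obtain ⟨a0, s0, hs0, heq⟩ := hQ.frac q
      have hW : IsEssentialLeftIdeal
          ((Submodule.comap (LinearMap.toSpanSingleton R R s0) L) ⊓
           (Submodule.comap (LinearMap.toSpanSingleton R R a0) L)) :=
        essInf' (essComap hess s0) (essComap hess a0)
      obtain ⟨c, hcV, hcreg⟩ := lemD hsp hg hW
      have hcReg : Reg c := leftRegReg hsp hg hcreg
      have hcs0L : c * s0 ∈ L := by
        have h8 := (Submodule.mem_inf.1 hcV).1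
        rwa [Submodule.mem_comap, LinearMap.toSpanSingleton_apply, smul_eq_mul] at h8
      have hca0L : c * a0 ∈ L := by
        have h8 := (Submodule.mem_inf.1 hcV).2
        rwa [Submodule.mem_comap, LinearMap.toSpanSingleton_apply, smul_eq_mul] at h8
      have hcs0Reg : Reg (c * s0) := by
        constructor
        · intro x hx
          rw [← mul_assoc] at hx
          exact hcReg.1 _ (hs0.1 _ hx)
        · intro x hx
          rw [mul_assoc] at hx
          exact hs0.2 _ (hcReg.2 _ hx)
      refine ⟨⟨c * a0, hLT hca0L⟩, ⟨c * s0, hLT hcs0L⟩, ?_, ?_⟩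
      · constructor
        · intro x hx
          have h9 := congrArg Subtype.val hx
          push_cast at h9
          have h10 := hcs0Reg.1 _ h9
          exact Subtype.ext h10
        · intro x hx
          have h9 := congrArg Subtype.val hx
          push_cast at h9
          have h10 := hcs0Reg.2 _ h9
          exact Subtype.ext h10
      · show ι ((⟨c * s0, hLT hcs0L⟩ : ↥T) : R) * q = ι ((⟨c * a0, hLT hca0L⟩ : ↥T) : R)
        show ι (c * s0) * q = ι (c * a0)
        rw [map_mul, map_mul, mul_assoc, heq]

end Final
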